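/- Let A be a complete set such that A ∩ P^𝒞 is |A|-compact, and let p(x̄) be a type over A of cardinality < |A|. Then there is a complete type p*(x̄) ∈ S_*(A) extending p. -/

import Mathlib

open FirstOrder Set Cardinal

universe u

namespace OverP

/-- `inP P m` says that the element `m` satisfies the monadic predicate `P`. -/
def inP {L : FirstOrder.Language.{u, u}} {M : Type u} [L.Structure M]
    (P : L.Relations 1) (m : M) : Prop :=
  FirstOrder.Language.Structure.RelMap P ![m]

/-- The set of realizations of the monadic predicate `P` in the monster model. -/
def Pset {L : FirstOrder.Language.{u, u}} {M : Type u} [L.Structure M]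
    (P : L.Relations 1) : Set M :=
  {m : M | inP P m}

/-- The cardinal `|T|` of the theory, i.e. `max ℵ₀ |L|`. -/
noncomputable def cardT (L : FirstOrder.Language.{u, u}) : Cardinal.{u} := max ℵ₀ L.card

/-- An instance of a formula with `n` free variables and parameters from the monster model. -/
structure Inst (L : FirstOrder.Language.{u, u}) (M : Type u) (n : ℕ) : Type u where
  k : ℕ
  φ : L.Formula (Fin n ⊕ Fin k)
  par : Fin k → M

/-- The tuple `c` realizes the formula instance `ι`. -/
def Inst.RealizedBy {L : FirstOrder.Language.{u, u}} {M : Type u} [L.Structure M] {n : ℕ}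
    (ι : Inst L M n) (c : Fin n → M) : Prop :=
  ι.φ.Realize (Sum.elim c ι.par)

/-- All parameters of the instance `ι` lie in the set `A`. -/
def Inst.overSet {L : FirstOrder.Language.{u, u}} {M : Type u} {n : ℕ}
    (ι : Inst L M n) (A : Set M) : Prop :=
  ∀ i, ι.par i ∈ A

/-- The complete type of the tuple `c` over the set `A` (as the set of all formula
instances over `A` realized by `c`). -/
def typeOver {L : FirstOrder.Language.{u, u}} {M : Type u} [L.Structure M]
    (A : Set M) {n : ℕ} (c : Fin n → M) : Set (Inst L M n) :=
  {ι | ι.overSet A ∧ ι.RealizedBy c}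

/-- `A` is a complete set: if `𝒞 ⊨ (∃ x̄ ⊆ P) ψ(x̄, b̄)` for parameters `b̄ ⊆ A`, then
witnesses can be found inside `P ∩ A`. -/
def IsComplete {L : FirstOrder.Language.{u, u}} {M : Type u} [L.Structure M]
    (P : L.Relations 1) (A : Set M) : Prop :=
  ∀ (n k : ℕ) (ψ : L.Formula (Fin n ⊕ Fin k)) (b : Fin k → M), (∀ i, b i ∈ A) →
    (∃ x : Fin n → M, (∀ i, inP P (x i)) ∧ ψ.Realize (Sum.elim x b)) →
    ∃ a : Fin n → M, (∀ i, a i ∈ A ∧ inP P (a i)) ∧ ψ.Realize (Sum.elim a b)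

/-- `StarFam P A c` says that the type `tp(c̄/A)` belongs to `S_*(A)`, witnessed by the
realization `c̄` itself:  `P ∩ (A ∪ c̄) = P ∩ A` and `A ∪ c̄` is complete. -/
def StarFam {L : FirstOrder.Language.{u, u}} {M : Type u} [L.Structure M]
    (P : L.Relations 1) (A : Set M) {ι : Type*} (c : ι → M) : Prop :=
  (∀ i, inP P (c i) → c i ∈ A) ∧ IsComplete P (A ∪ Set.range c)

/-- `S_*(A)`: the set of complete types over `A` in `n` variables, orthogonal to `P`. -/
def SStar {L : FirstOrder.Language.{u, u}} {M : Type u} [L.Structure M]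
    (P : L.Relations 1) (A : Set M) (n : ℕ) : Set (Set (Inst L M n)) :=
  {p | ∃ c : Fin n → M, StarFam P A c ∧ p = typeOver A c}

/-- The cardinality `|S_*(A)|` (summed over all finite tuple lengths). -/
def cardSStar {L : FirstOrder.Language.{u, u}} {M : Type u} [L.Structure M]
    (P : L.Relations 1) (A : Set M) : Cardinal.{u} :=
  #(Σ n : ℕ, SStar P A n)

/-- `A ≡ B`: the sets `A` and `B` realize the same theory with parameters, i.e. there is
an elementary bijection between them. -/
def ElemEquiv (L : FirstOrder.Language.{u, u}) {M : Type u} [L.Structure M]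
    (A B : Set M) : Prop :=
  ∃ f : A → B, Function.Bijective f ∧
    ∀ (n : ℕ) (φ : L.Formula (Fin n)) (a : Fin n → A),
      φ.Realize (fun i => (a i : M)) ↔ φ.Realize (fun i => (f (a i) : M))

/-- A complete set `A` is stable if `|S_*(A')| ≤ |A'| ^ |T|` for every `A' ≡ A`. -/
def IsStableSet {L : FirstOrder.Language.{u, u}} {M : Type u} [L.Structure M]
    (P : L.Relations 1) (A : Set M) : Prop :=
  IsComplete P A ∧ ∀ B : Set M, ElemEquiv L A B → cardSStar P B ≤ #B ^ cardT L

/-- `A` is `λ`-compact: every partial type over `A` of size `< λ` (consistent, i.e.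
realized in the monster model) is realized in `A`. -/
def IsCompactIn (L : FirstOrder.Language.{u, u}) {M : Type u} [L.Structure M]
    (A : Set M) (lam : Cardinal.{u}) : Prop :=
  ∀ (n : ℕ) (p : Set (Inst L M n)), #p < lam → (∀ ι ∈ p, ι.overSet A) →
    (∃ c : Fin n → M, ∀ ι ∈ p, ι.RealizedBy c) →
    ∃ a : Fin n → M, (∀ i, a i ∈ A) ∧ ∀ ι ∈ p, ι.RealizedBy a

/-- A set is saturated when it is `|A|`-compact. -/
def IsSaturatedSet (L : FirstOrder.Language.{u, u}) {M : Type u} [L.Structure M]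
    (A : Set M) : Prop :=
  IsCompactIn L A #A

/-- The structure induced on a subset of `M` (the language is relational). -/
def setStructure (L : FirstOrder.Language.{u, u}) {M : Type u} [L.Structure M]
    [L.IsRelational] (B : Set M) : L.Structure B where
  funMap := fun f _ => isEmptyElim f
  RelMap := fun r x => FirstOrder.Language.Structure.RelMap r (fun i => (x i : M))

/-- Satisfaction of a formula in the induced structure on a subset `B ⊆ M`. -/
def RealizeIn {L : FirstOrder.Language.{u, u}} {M : Type u} [L.Structure M]
    [L.IsRelational] (B : Set M) {α : Type} (φ : L.Formula α) (v : α → B) : Prop :=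
  letI := setStructure L B
  φ.Realize v

/-- Hypothesis 1: (1) every relation on `P^𝒞` definable in `𝒞` is definable (without
parameters) in `𝒞 | P^𝒞`; (2) every type over `P^𝒞` is definable. -/
def Hyp1 {L : FirstOrder.Language.{u, u}} {M : Type u} [L.Structure M]
    [L.IsRelational] (P : L.Relations 1) : Prop :=
  (∀ (n k : ℕ) (ψ : L.Formula (Fin n ⊕ Fin k)) (b : Fin k → M),
    ∃ θ : L.Formula (Fin n), ∀ a : Fin n → (Pset P : Set M),
      ψ.Realize (Sum.elim (fun i => (a i : M)) b) ↔ RealizeIn (Pset P : Set M) θ a) ∧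
  (∀ (n : ℕ) (c : Fin n → M) (k : ℕ) (ψ : L.Formula (Fin n ⊕ Fin k)),
    ∃ (l : ℕ) (θ : L.Formula (Fin k ⊕ Fin l)) (e : Fin l → M),
      (∀ i, inP P (e i)) ∧
      ∀ b : Fin k → M, (∀ i, inP P (b i)) →
        (ψ.Realize (Sum.elim c b) ↔ θ.Realize (Sum.elim b e)))

/-- The theory has quantifier elimination: every formula is equivalent to an atomic one. -/
def HypQE (L : FirstOrder.Language.{u, u}) (M : Type u) [L.Structure M] : Prop :=
  ∀ (n : ℕ) (φ : L.Formula (Fin n)), ∃ θ : L.Formula (Fin n),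
    FirstOrder.Language.BoundedFormula.IsAtomic θ ∧ ∀ v : Fin n → M, φ.Realize v ↔ θ.Realize v

/-- Hypothesis 2: every model of `T` (elementary submodel of the monster) is a stable set. -/
def Hyp2 {L : FirstOrder.Language.{u, u}} {M : Type u} [L.Structure M]
    (P : L.Relations 1) : Prop :=
  ∀ S : L.ElementarySubstructure M, IsStableSet P (S : Set M)

/-- The set-theoretic assumption: there are arbitrarily large `λ` with `λ^{<λ} = λ`. -/
def HypST : Prop :=
  ∀ κ : Cardinal.{u}, ∃ lam : Cardinal.{u}, κ ≤ lam ∧ lam ^< lam = lam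

/-- `A ⊆_t B`: every formula with parameters in `A` realized by a tuple from `B` is
realized by a tuple from `A` (a Tarski–Vaught style condition). -/
def SubT (L : FirstOrder.Language.{u, u}) {M : Type u} [L.Structure M]
    (A B : Set M) : Prop :=
  ∀ (n k : ℕ) (ψ : L.Formula (Fin n ⊕ Fin k)) (a : Fin k → M) (b : Fin n → M),
    (∀ i, a i ∈ A) → (∀ i, b i ∈ B) → ψ.Realize (Sum.elim b a) →
    ∃ b' : Fin n → M, (∀ i, b' i ∈ A) ∧ ψ.Realize (Sum.elim b' a)

/-- `(Θ, e)` defines the `ψ`-type of `c̄` over `D`. -/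
def Defines {L : FirstOrder.Language.{u, u}} {M : Type u} [L.Structure M] {n k l : ℕ}
    (ψ : L.Formula (Fin n ⊕ Fin k)) (Θ : L.Formula (Fin k ⊕ Fin l))
    (e : Fin l → M) (c : Fin n → M) (D : Set M) : Prop :=
  ∀ a : Fin k → M, (∀ i, a i ∈ D) →
    (ψ.Realize (Sum.elim c a) ↔ Θ.Realize (Sum.elim a e))

/-- `tp(c'/B)` is a stationarization of `tp(c/A)`: for every `ψ` some definition over `A`
defines both `ψ`-types. -/
def IsStationarization {L : FirstOrder.Language.{u, u}} {M : Type u} [L.Structure M]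
    (A B : Set M) {n : ℕ} (c c' : Fin n → M) : Prop :=
  ∀ (k : ℕ) (ψ : L.Formula (Fin n ⊕ Fin k)),
    ∃ (l : ℕ) (Θ : L.Formula (Fin k ⊕ Fin l)) (e : Fin l → M),
      (∀ i, e i ∈ A) ∧ Defines ψ Θ e c A ∧ Defines ψ Θ e c' B

/-- `c` and `d` (families indexed by `ι`) realize the same type over `A`. -/
def SameTypeOver (L : FirstOrder.Language.{u, u}) {M : Type u} [L.Structure M]
    (A : Set M) {ι : Type*} (c d : ι → M) : Prop :=
  ∀ (n k : ℕ) (φ : L.Formula (Fin n ⊕ Fin k)) (s : Fin n → ι) (a : Fin k → M),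
    (∀ i, a i ∈ A) →
    (φ.Realize (Sum.elim (c ∘ s) a) ↔ φ.Realize (Sum.elim (d ∘ s) a))

/-- `f` is a partial elementary map with domain `D`. -/
def IsElemMap (L : FirstOrder.Language.{u, u}) {M : Type u} [L.Structure M]
    (D : Set M) (f : D → M) : Prop :=
  ∀ (n : ℕ) (φ : L.Formula (Fin n)) (d : Fin n → D),
    φ.Realize (fun i => (d i : M)) ↔ φ.Realize (fun i => f (d i))

/-- A set `Δ₁` of formulas `ψ(x̄, ȳ)` with `x̄` of length `n`. -/
abbrev Delta1 (L : FirstOrder.Language.{u, u}) (n : ℕ) :=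
  Set (Σ k : ℕ, L.Formula (Fin n ⊕ Fin k))


section Auxiliary

variable {L : FirstOrder.Language.{u, u}} {M : Type u} [L.Structure M]

/-- Relativization of a formula to the predicate `P`: quantifiers are restricted to
range over realizations of `P`. -/
def relativize (P : L.Relations 1) :
    ∀ {α : Type*} {k : ℕ}, L.BoundedFormula α k → L.BoundedFormula α k
  | _, _, .falsum => .falsum
  | _, _, .equal t u => .equal t u
  | _, _, .rel R ts => .rel R ts
  | _, _, .imp f g => .imp (relativize P f) (relativize P g)
  | _, k, .all f =>
      .all ((P.boundedFormula ![FirstOrder.Language.Term.var (Sum.inr (Fin.last k))]).imp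
        (relativize P f))

lemma realize_term_coe [L.IsRelational] (B : Set M) {γ : Type*} (t : L.Term γ)
    (u : γ → B) :
    ((letI := setStructure L B; t.realize u : B) : M) = t.realize (fun a => (u a : M)) := by
  letI := setStructure L B
  induction t with
  | var => rfl
  | func f ts ih => exact isEmptyElim f

lemma realize_relativize [L.IsRelational] (P : L.Relations 1) {α : Type} {k : ℕ}
    (φ : L.BoundedFormula α k) (v : α → (Pset P : Set M)) :
    ∀ xs : Fin k → (Pset P : Set M),
      (@FirstOrder.Language.BoundedFormula.Realize L (Pset P : Set M)
        (setStructure L (Pset P)) α k φ v xs) ↔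
        (relativize P φ).Realize (fun a => (v a : M)) (fun i => (xs i : M)) := by
  letI := setStructure L (Pset P : Set M)
  induction φ with
  | falsum => intro xs; simp only [relativize]; exact Iff.rfl
  | @equal k t u =>
      intro xs
      simp only [relativize]
      have h1 := realize_term_coe (M := M) (Pset P) t (Sum.elim v xs)
      have h2 := realize_term_coe (M := M) (Pset P) u (Sum.elim v xs)
      have he : (fun a => ((Sum.elim v xs a : (Pset P : Set M)) : M)) =
          Sum.elim (fun a => (v a : M)) (fun i => (xs i : M)) := by
        funext a; cases a <;> rfl
      rw [he] at h1 h2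
      exact Iff.trans Subtype.ext_iff (by rw [h1, h2]; exact Iff.rfl)
  | @rel k m R ts =>
      intro xs
      simp only [relativize]
      have h1 := fun i => realize_term_coe (M := M) (Pset P) (ts i) (Sum.elim v xs)
      have he : (fun a => ((Sum.elim v xs a : (Pset P : Set M)) : M)) =
          Sum.elim (fun a => (v a : M)) (fun i => (xs i : M)) := by
        funext a; cases a <;> rfl
      simp only [he] at h1
      exact Iff.of_eq (congrArg (FirstOrder.Language.Structure.RelMap R) (funext h1))
  | imp f g ihf ihg =>
      intro xs
      simp only [relativize, FirstOrder.Language.BoundedFormula.realize_imp]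
      rw [ihf xs, ihg xs]
  | @all k f ih =>
      intro xs
      simp only [relativize, FirstOrder.Language.BoundedFormula.realize_all,
        FirstOrder.Language.BoundedFormula.realize_imp]
      have hguard : ∀ y : M,
          ((P.boundedFormula ![FirstOrder.Language.Term.var (Sum.inr (Fin.last k))] :
            L.BoundedFormula α (k + 1))).Realize
            (fun a => (v a : M)) (Fin.snoc (fun i => (xs i : M)) y) ↔ inP P y := by
        intro y
        have hv : (fun i =>
            ((![FirstOrder.Language.Term.var (Sum.inr (Fin.last k))] :
              Fin 1 → L.Term (α ⊕ Fin (k + 1))) i).realize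
              (Sum.elim (fun a => (v a : M)) (Fin.snoc (fun i => (xs i : M)) y))) = ![y] := by
          funext i
          fin_cases i
          simp [FirstOrder.Language.Term.realize, Fin.snoc_last]
        exact Iff.of_eq (congrArg (FirstOrder.Language.Structure.RelMap P) hv)
      have hsnoc : ∀ x : (Pset P : Set M),
          (fun i => ((Fin.snoc xs x : Fin (k + 1) → (Pset P : Set M)) i : M)) =
            Fin.snoc (fun i => (xs i : M)) (x : M) := by
        intro x
        funext i
        refine Fin.lastCases ?_ ?_ i
        · simp [Fin.snoc_last]
        · intro j; simp [Fin.snoc_castSucc]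
      constructor
      · intro h y
        rw [hguard y]
        intro hy
        have h2 := (ih (Fin.snoc xs ⟨y, hy⟩)).mp (h ⟨y, hy⟩)
        rw [hsnoc ⟨y, hy⟩] at h2
        exact h2
      · intro h x
        refine (ih (Fin.snoc xs x)).mpr ?_
        have h2 := h (x : M)
        rw [hguard (x : M)] at h2
        have h3 := h2 x.2
        rw [hsnoc x]
        exact h3

lemma realizeIn_iff [L.IsRelational] (P : L.Relations 1) {β : Type} (τ : L.Formula β)
    (w : β → (Pset P : Set M)) :
    RealizeIn (Pset P : Set M) τ w ↔
      FirstOrder.Language.Formula.Realize (relativize P τ) (fun i => (w i : M)) := by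
  have h := realize_relativize (M := M) P τ w default
  have he : (fun i : Fin 0 => ((default : Fin 0 → (Pset P : Set M)) i : M)) =
      (default : Fin 0 → M) := funext (fun i => i.elim0)
  rw [he] at h
  exact h

/-- Any superset of a complete set is complete, assuming Hyp1(1). -/
lemma isComplete_superset [L.IsRelational] (P : L.Relations 1) (h1 : Hyp1 (M := M) P)
    {A B : Set M} (hA : IsComplete P A) (hAB : A ⊆ B) : IsComplete P B := by
  intro n k ψ b hb hex
  obtain ⟨x, hxP, hxψ⟩ := hex
  obtain ⟨θ, hθ⟩ := h1.1 n k ψ b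
  have hx' : RealizeIn (Pset P : Set M) θ (fun i => ⟨x i, hxP i⟩) := (hθ _).mp hxψ
  have hx2 : FirstOrder.Language.Formula.Realize (relativize P θ) x := (realizeIn_iff P θ _).mp hx'
  obtain ⟨a, haA, haθ⟩ := hA n 0 (FirstOrder.Language.Formula.relabel Sum.inl (relativize P θ)) (fun i => i.elim0)
    (fun i => i.elim0)
    ⟨x, hxP, by
      rw [FirstOrder.Language.Formula.realize_relabel]
      exact hx2⟩
  rw [FirstOrder.Language.Formula.realize_relabel] at haθ
  have ha2 : FirstOrder.Language.Formula.Realize (relativize P θ) a := haθ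
  have hra : RealizeIn (Pset P : Set M) θ (fun i => ⟨a i, (haA i).2⟩) :=
    (realizeIn_iff P θ _).mpr ha2
  exact ⟨a, fun i => ⟨hAB (haA i).1, (haA i).2⟩, (hθ _).mpr hra⟩

end Auxiliary

/-- Lemma 3.5: over a complete set `A` with `A ∩ P` being `|A|`-compact,
every type of size `< |A|` over `A` extends to a complete type in `S_*(A)`. -/
theorem statement_3 {L : FirstOrder.Language.{u, u}} {M : Type u} [L.Structure M]
    [L.IsRelational] (P : L.Relations 1) (hQE : HypQE L M) (h1 : Hyp1 (M := M) P)
    (A : Set M) (hA : IsComplete P A) (hcomp : IsCompactIn L (A ∩ Pset P) #A)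
    (n : ℕ) (p : Set (Inst L M n)) (hover : ∀ ι ∈ p, ι.overSet A)
    (hcons : ∃ c : Fin n → M, ∀ ι ∈ p, ι.RealizedBy c)
    (hsize : #p < #A) :
    ∃ c : Fin n → M, StarFam P A c ∧ ∀ ι ∈ p, ι.RealizedBy c := by
  classical
  obtain ⟨c0, hc0⟩ := hcons
  let Spred : Fin n → Prop := fun i => inP P (c0 i)
  let m1 := Fintype.card {i // Spred i}
  let m2 := Fintype.card {i // ¬Spred i}
  let eq1 : {i // Spred i} ≃ Fin m1 := Fintype.equivFin _
  let eq2 : {i // ¬Spred i} ≃ Fin m2 := Fintype.equivFin _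
  let E : Fin n ≃ Fin m1 ⊕ Fin m2 := (Equiv.sumCompl Spred).symm.trans (eq1.sumCongr eq2)
  have hE1 : ∀ (i : Fin n) (j : Fin m1), E i = Sum.inl j → Spred i := by
    intro i j h
    rcases h' : (Equiv.sumCompl Spred).symm i with s | s
    · have : i = (Equiv.sumCompl Spred) (Sum.inl s) := by
        rw [← h', Equiv.apply_symm_apply]
      rw [this, Equiv.sumCompl_apply_inl]
      exact s.2
    · exfalso
      have hE : E i = Sum.inr (eq2 s) := by
        show (eq1.sumCongr eq2) ((Equiv.sumCompl Spred).symm i) = _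
        rw [h']
        rfl
      rw [h] at hE
      exact Sum.inl_ne_inr hE
  have hE2 : ∀ (i : Fin n) (j : Fin m2), E i = Sum.inr j → ¬Spred i := by
    intro i j h
    rcases h' : (Equiv.sumCompl Spred).symm i with s | s
    · exfalso
      have hE : E i = Sum.inl (eq1 s) := by
        show (eq1.sumCongr eq2) ((Equiv.sumCompl Spred).symm i) = _
        rw [h']
        rfl
      rw [h] at hE
      exact Sum.inr_ne_inl hE
    · have : i = (Equiv.sumCompl Spred) (Sum.inr s) := by
        rw [← h', Equiv.apply_symm_apply]
      rw [this, Equiv.sumCompl_apply_inr]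
      exact s.2
  have hEsymm : ∀ (i : Fin n) (x : Fin m1 ⊕ Fin m2), E i = x → E.symm x = i := by
    intro i x h
    rw [← h, Equiv.symm_apply_apply]
  let ccomb : (Fin m1 → M) → Fin n → M := fun b i =>
    Sum.elim b (fun j => c0 (E.symm (Sum.inr j))) (E i)
  let d : Fin m1 → M := fun j => c0 (E.symm (Sum.inl j))
  have hdP : ∀ j, inP P (d j) :=
    fun j => hE1 (E.symm (Sum.inl j)) j (E.apply_symm_apply _)
  have hccomb0 : ccomb d = c0 := by
    funext i
    rcases h : E i with j | j
    · show Sum.elim d (fun j => c0 (E.symm (Sum.inr j))) (E i) = c0 i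
      rw [h]
      show c0 (E.symm (Sum.inl j)) = c0 i
      rw [hEsymm i _ h]
    · show Sum.elim d (fun j => c0 (E.symm (Sum.inr j))) (E i) = c0 i
      rw [h]
      show c0 (E.symm (Sum.inr j)) = c0 i
      rw [hEsymm i _ h]
  have key : ∀ ι : p, ∃ J : Inst L M m1, J.overSet (A ∩ Pset P) ∧
      ∀ b : Fin m1 → M, (∀ i, inP P (b i)) →
        (J.RealizedBy b ↔
          (ι : Inst L M n).φ.Realize (Sum.elim (ccomb b) (ι : Inst L M n).par)) := by
    intro ι
    set k0 := (ι : Inst L M n).k with hk0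
    set φ0 := (ι : Inst L M n).φ with hφ0
    set par0 := (ι : Inst L M n).par with hpar0
    let σ : (Fin n ⊕ Fin k0) → (Fin (m2 + k0) ⊕ Fin m1) :=
      Sum.elim
        (fun i => Sum.elim (fun j1 => Sum.inr j1)
          (fun j2 => Sum.inl (finSumFinEquiv (Sum.inl j2))) (E i))
        (fun y => Sum.inl (finSumFinEquiv (Sum.inr y)))
    let ψ : L.Formula (Fin (m2 + k0) ⊕ Fin m1) := φ0.relabel σ
    let C : Fin (m2 + k0) → M := fun i =>
      Sum.elim (fun j => c0 (E.symm (Sum.inr j))) par0 (finSumFinEquiv.symm i)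
    have hre : ∀ b : Fin m1 → M,
        ψ.Realize (Sum.elim C b) ↔ φ0.Realize (Sum.elim (ccomb b) par0) := by
      intro b
      have : ψ.Realize (Sum.elim C b) ↔ φ0.Realize ((Sum.elim C b) ∘ σ) :=
        FirstOrder.Language.Formula.realize_relabel
      rw [this]
      have he : (Sum.elim C b) ∘ σ = Sum.elim (ccomb b) par0 := by
        funext x
        rcases x with i | y
        · show Sum.elim C b (σ (Sum.inl i)) = ccomb b i
          show Sum.elim C b (Sum.elim (fun j1 => Sum.inr j1)
            (fun j2 => Sum.inl (finSumFinEquiv (Sum.inl j2))) (E i)) =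
            Sum.elim b (fun j => c0 (E.symm (Sum.inr j))) (E i)
          rcases h : E i with j | j
          · rfl
          · show C (finSumFinEquiv (Sum.inl j)) = c0 (E.symm (Sum.inr j))
            show Sum.elim (fun j => c0 (E.symm (Sum.inr j))) par0
              (finSumFinEquiv.symm (finSumFinEquiv (Sum.inl j))) = _
            rw [Equiv.symm_apply_apply]
            rfl
        · show C (finSumFinEquiv (Sum.inr y)) = par0 y
          show Sum.elim (fun j => c0 (E.symm (Sum.inr j))) par0
            (finSumFinEquiv.symm (finSumFinEquiv (Sum.inr y))) = _
          rw [Equiv.symm_apply_apply]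
          rfl
      rw [he]
    obtain ⟨l, θ, e, heP, hdef⟩ := h1.2 (m2 + k0) C m1 ψ
    obtain ⟨τ, hτ⟩ := h1.1 m1 l θ e
    refine ⟨⟨0, FirstOrder.Language.Formula.relabel Sum.inl (relativize P τ),
      fun i => i.elim0⟩, fun i => i.elim0, ?_⟩
    intro b hbP
    have step1 : (⟨0, FirstOrder.Language.Formula.relabel Sum.inl (relativize P τ),
        fun i => i.elim0⟩ : Inst L M m1).RealizedBy b ↔
        FirstOrder.Language.Formula.Realize (relativize P τ) b := by
      unfold Inst.RealizedBy
      rw [FirstOrder.Language.Formula.realize_relabel]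
      exact Iff.rfl
    have step2 : FirstOrder.Language.Formula.Realize (relativize P τ) b ↔
        RealizeIn (Pset P : Set M) τ (fun i => ⟨b i, hbP i⟩) :=
      (realizeIn_iff P τ (fun i => ⟨b i, hbP i⟩)).symm
    have step3 : RealizeIn (Pset P : Set M) τ (fun i => ⟨b i, hbP i⟩) ↔
        θ.Realize (Sum.elim b e) := (hτ (fun i => ⟨b i, hbP i⟩)).symm
    have step4 : θ.Realize (Sum.elim b e) ↔ ψ.Realize (Sum.elim C b) := (hdef b hbP).symm
    exact step1.trans (step2.trans (step3.trans (step4.trans (hre b))))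
  choose J hJo hJiff using key
  have hq : #(Set.range J) < #A := lt_of_le_of_lt Cardinal.mk_range_le hsize
  have hcons' : ∃ c : Fin m1 → M, ∀ ι' ∈ Set.range J, ι'.RealizedBy c := by
    refine ⟨d, ?_⟩
    rintro ι' ⟨ι, rfl⟩
    refine (hJiff ι d hdP).mpr ?_
    rw [hccomb0]
    exact hc0 ι ι.2
  obtain ⟨a, haA, haR⟩ := hcomp m1 (Set.range J) hq
    (by rintro ι' ⟨ι, rfl⟩; exact hJo ι) hcons'
  have haP : ∀ i, inP P (a i) := fun i => (haA i).2
  refine ⟨ccomb a, ⟨?_, isComplete_superset P h1 hA Set.subset_union_left⟩, ?_⟩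
  · intro i hPi
    rcases h : E i with j | j
    · have hc : ccomb a i = a j := by
        show Sum.elim a (fun j => c0 (E.symm (Sum.inr j))) (E i) = a j
        rw [h]
        rfl
      rw [hc]
      exact (haA j).1
    · exfalso
      have hc : ccomb a i = c0 i := by
        show Sum.elim a (fun j => c0 (E.symm (Sum.inr j))) (E i) = c0 i
        rw [h]
        show c0 (E.symm (Sum.inr j)) = c0 i
        rw [hEsymm i _ h]
      rw [hc] at hPi
      exact hE2 i j h hPi
  · intro ι hι
    exact (hJiff ⟨ι, hι⟩ a haP).mp (haR (J ⟨ι, hι⟩) ⟨⟨ι, hι⟩, rfl⟩)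

end OverP
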